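/- In the Δ-core R-factorization, consider a meta-phrase T[s..e) fully contained in a fragment T[s'..e') that occurs in R, and suppose e' − s ≥ 3Δ. Then e − s ≥ (e' − s)/3; that is, the meta-phrase covers at least one third of the part of the fragment to its right. -/

import Mathlib

/-- In the `Δ`-core factorization, a meta-phrase starting at position `s` and
fully contained in a fragment `T[s..e')` that occurs in `R` with
`e' − s ≥ 3Δ` has length `2^{J+1}·Δ ≥ (e'−s)/3`, where `J` is the maximal `j`
such that `T[s..s+3·2^j·Δ)` occurs in `R`. -/
theorem stmt9 (T R : List ℕ) (Δ s e' : ℕ) (hΔ : 1 ≤ Δ)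
    (he' : e' ≤ T.length) (hlen : s + 3 * Δ ≤ e')
    (hocc : ((T.drop s).take (e' - s)) <:+: R) :
    e' - s ≤ 3 * (2 ^ (Nat.findGreatest
      (fun j => 3 * 2 ^ j * Δ ≤ (T.drop s).length ∧
        ((T.drop s).take (3 * 2 ^ j * Δ)) <:+: R) (T.drop s).length + 1) * Δ) := by
  set L := T.drop s with hL
  set N := e' - s with hN
  have hN3 : 3 * Δ ≤ N := by omega
  have hΔ' : 0 < 3 * Δ := by omega
  set q := N / (3 * Δ) with hq
  have hq1 : 1 ≤ q := (Nat.one_le_div_iff hΔ').2 hN3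
  set m := Nat.log 2 q with hm
  have h1 : 2 ^ m ≤ q := Nat.pow_log_le_self 2 (by omega)
  have h2 : q < 2 ^ (m + 1) := Nat.lt_pow_succ_log_self (by norm_num) q
  have hqm : q * (3 * Δ) ≤ N := Nat.div_mul_le_self N (3 * Δ)
  have hmod : N % (3 * Δ) < 3 * Δ := Nat.mod_lt _ hΔ'
  have hdm : 3 * Δ * q + N % (3 * Δ) = N := Nat.div_add_mod N (3 * Δ)
  have hle : 3 * 2 ^ m * Δ ≤ N := by nlinarith
  have hup : N ≤ 3 * 2 ^ (m + 1) * Δ := by nlinarith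
  have hNlen : N ≤ L.length := by
    rw [hL, List.length_drop]; omega
  have hmle : m ≤ L.length := by
    have : m < 2 ^ m := Nat.lt_two_pow_self (n := m)
    nlinarith
  have hPm : 3 * 2 ^ m * Δ ≤ L.length ∧ (L.take (3 * 2 ^ m * Δ)) <:+: R := by
    refine ⟨le_trans hle hNlen, ?_⟩
    have hpre : L.take (3 * 2 ^ m * Δ) <+: L.take N := by
      have := List.take_prefix (3 * 2 ^ m * Δ) (L.take N)
      rwa [List.take_take, min_eq_left hle] at this
    exact hpre.isInfix.trans hocc
  have hJ : m ≤ Nat.findGreatest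
      (fun j => 3 * 2 ^ j * Δ ≤ L.length ∧ (L.take (3 * 2 ^ j * Δ)) <:+: R)
      L.length := Nat.le_findGreatest hmle hPm
  have hpow : 2 ^ (m + 1) ≤ 2 ^ (Nat.findGreatest
      (fun j => 3 * 2 ^ j * Δ ≤ L.length ∧ (L.take (3 * 2 ^ j * Δ)) <:+: R)
      L.length + 1) := Nat.pow_le_pow_right (by norm_num) (by omega)
  nlinarith
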